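/- Theorem (NN pruning in the general join): Let k1' = k − d2. If u' ∈ R1 is k1'-dominated by some tuple u in the same join group, then for any join-compatible v' ∈ R2, the joined tuple (u, v') k-dominates (u', v'): it dominates in at least k1' attributes from R1 and is equal on all d2 attributes from R2, totaling at least k1' + d2 = k attributes, with strict preference on at least one. Hence (u', v') is not a k-dominant skyline of R1 ⋈ R2. -/

import Mathlib

/-- `x` k-dominates `y`: `x ≤ y` on at least `k` attributes and `x < y` somewhere. -/
def kdom (d k : ℕ) (x y : Fin d → ℝ) : Prop :=
  ∃ S : Finset (Fin d), k ≤ S.card ∧ (∀ i ∈ S, x i ≤ y i) ∧ ∃ j, x j < y j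

/-- NN pruning in the general join: with `k1' = k - d2` and
`max{d1,d2} < k < d1 + d2`, if `u' ∈ R1` is `k1'`-dominated by some `u` in the
same join group, then for any join-compatible `v' ∈ R2`, the joined tuple
`(u, v')` `k`-dominates `(u', v')`; hence `(u', v')` is not a `k`-dominant
skyline of `R1 ⋈ R2`. -/
theorem nn_pruning_general {G : Type*} (d1 d2 k : ℕ)
    (hmax : max d1 d2 < k) (hlt : k < d1 + d2)
    (R1 : Finset ((Fin d1 → ℝ) × G)) (R2 : Finset ((Fin d2 → ℝ) × G))
    (u u' : (Fin d1 → ℝ) × G) (hu : u ∈ R1) (hu' : u' ∈ R1)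
    (hgrp : u.2 = u'.2) (hdom : kdom d1 (k - d2) u.1 u'.1) :
    ∀ v' ∈ R2, u'.2 = v'.2 →
      kdom (d1 + d2) k (Fin.append u.1 v'.1) (Fin.append u'.1 v'.1) ∧
      ¬ (∀ w ∈ R1, ∀ z ∈ R2, w.2 = z.2 →
          ¬ kdom (d1 + d2) k (Fin.append w.1 z.1) (Fin.append u'.1 v'.1)) := by
  intro v' hv' hg
  have key : kdom (d1 + d2) k (Fin.append u.1 v'.1) (Fin.append u'.1 v'.1) := by
    obtain ⟨S, hcard, hle, j, hj⟩ := hdom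
    refine ⟨S.map ⟨Fin.castAdd d2, Fin.castAdd_injective d1 d2⟩ ∪
      Finset.univ.map ⟨Fin.natAdd d1, fun a b h => by ext; have := congrArg Fin.val h; simp [Fin.natAdd] at this; omega⟩, ?_, ?_, ?_⟩
    · have hdisj : Disjoint (S.map ⟨Fin.castAdd d2, Fin.castAdd_injective d1 d2⟩)
          (Finset.univ.map ⟨Fin.natAdd d1, fun a b h => by ext; have := congrArg Fin.val h; simp [Fin.natAdd] at this; omega⟩) := by
        rw [Finset.disjoint_left]
        rintro a ha hb
        simp only [Finset.mem_map, Function.Embedding.coeFn_mk] at ha hb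
        obtain ⟨i, _, rfl⟩ := ha
        obtain ⟨i', _, heq⟩ := hb
        have := congrArg Fin.val heq
        have h2 : d1 + (i' : ℕ) = (i : ℕ) := this
        omega
      rw [Finset.card_union_of_disjoint hdisj, Finset.card_map, Finset.card_map,
        Finset.card_univ, Fintype.card_fin]
      have hd2 : d2 < k := lt_of_le_of_lt (le_max_right d1 d2) hmax
      omega
    · intro i hi
      rw [Finset.mem_union] at hi
      rcases hi with hi | hi
      · simp only [Finset.mem_map, Function.Embedding.coeFn_mk] at hi
        obtain ⟨i', hi', rfl⟩ := hi
        simpa [Fin.append_left] using hle i' hi'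
      · simp only [Finset.mem_map, Function.Embedding.coeFn_mk] at hi
        obtain ⟨i', _, rfl⟩ := hi
        show Fin.append u.1 v'.1 (Fin.natAdd d1 i') ≤ Fin.append u'.1 v'.1 (Fin.natAdd d1 i')
        rw [Fin.append_right, Fin.append_right]
    · exact ⟨Fin.castAdd d2 j, by simpa [Fin.append_left] using hj⟩
  refine ⟨key, fun h => h u hu v' hv' (hgrp.trans hg) key⟩
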